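/- arXiv:1103.4475 — 2 statements merged into one kernel-verified Lean document; each statement's English description precedes it below -/
import Mathlib

section
/- Let â₁, â₂, â₃ be unit vectors in a real inner-product plane such that for all i ≠ j, c_ij := ⟨â_i, â_j⟩ satisfies 0 < |c_ij| < 1. Let n be a unit vector orthogonal to the plane. Define A_i := sqrt( c_jk / (c_jk - c_ij·c_ik) ) and B_i := A_i·sqrt( -c_ij·c_ik / c_jk ) for {i,j,k} = {1,2,3}, assuming the quantities under the square roots are nonnegative and c_jk - c_ij c_ik ≠ 0. Then the vectors e_i := A_i·â_i + B_i·n satisfy ⟨e_i, e_i⟩ = A_i² + B_i² = 1 and ⟨e_i, e_j⟩ = A_i A_j c_ij + B_i B_j = 0 for i ≠ j, provided the signs of the B_i are chosen so that B_i B_j = -A_i A_j c_ij. -/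
open RealInnerProductSpace

/-- Proposition 5 of the paper: reconstruction of an orthonormal
triad e_i = A_i·â_i + B_i·n from unit vectors â₁,â₂,â₃ in a plane (with
0 < |c_ij| < 1 for c_ij = ⟨â_i,â_j⟩) and a unit normal n, where
A_i = sqrt(c_jk/(c_jk - c_ij c_ik)), |B_i| = A_i·sqrt(-c_ij c_ik / c_jk),
the quantities under the square roots being nonnegative, the denominators
nonzero, and the signs of the B_i chosen so that B_i B_j = -A_i A_j c_ij. -/
theorem orthonormal_triad_reconstruction
    {V : Type*} [NormedAddCommGroup V] [InnerProductSpace ℝ V]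
    (a : Fin 3 → V) (n : V)
    (ha : ∀ i, ‖a i‖ = 1) (hn : ‖n‖ = 1)
    (han : ∀ i, ⟪a i, n⟫ = 0)
    (hplane : ∃ v w : V, ∀ i, a i ∈ Submodule.span ℝ ({v, w} : Set V))
    (c : Fin 3 → Fin 3 → ℝ) (hc : ∀ i j, c i j = ⟪a i, a j⟫)
    (hcb : ∀ i j, i ≠ j → 0 < |c i j| ∧ |c i j| < 1)
    (A B : Fin 3 → ℝ)
    (hA : ∀ i j k, i ≠ j → j ≠ k → i ≠ k →
      A i = Real.sqrt (c j k / (c j k - c i j * c i k)))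
    (hAnn : ∀ i j k, i ≠ j → j ≠ k → i ≠ k →
      0 ≤ c j k / (c j k - c i j * c i k) ∧ c j k - c i j * c i k ≠ 0)
    (hB : ∀ i j k, i ≠ j → j ≠ k → i ≠ k →
      |B i| = A i * Real.sqrt (-(c i j * c i k) / c j k)
        ∧ 0 ≤ -(c i j * c i k) / c j k)
    (hsign : ∀ i j, i ≠ j → B i * B j = -(A i * A j * c i j)) :
    ∀ i j, (A i ^ 2 + B i ^ 2 = 1
        ∧ ⟪A i • a i + B i • n, A i • a i + B i • n⟫ = 1)
      ∧ (i ≠ j → ⟪A i • a i + B i • n, A j • a j + B j • n⟫ = 0) := by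
  intro i j
  have hex : ∃ p q : Fin 3, i ≠ p ∧ p ≠ q ∧ i ≠ q := by
    fin_cases i
    · exact ⟨1, 2, by decide, by decide, by decide⟩
    · exact ⟨0, 2, by decide, by decide, by decide⟩
    · exact ⟨0, 1, by decide, by decide, by decide⟩
  obtain ⟨p, q, hip, hpq, hiq⟩ := hex
  have hA' := hA i p q hip hpq hiq
  have hAnn' := hAnn i p q hip hpq hiq
  have hB' := hB i p q hip hpq hiq
  have hcpq : c p q ≠ 0 := by
    intro h
    have := (hcb p q hpq).1
    rw [h] at this
    simp at this
  have hA2 : A i ^ 2 = c p q / (c p q - c i p * c i q) := by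
    rw [hA', Real.sq_sqrt hAnn'.1]
  have hB2 : B i ^ 2 = A i ^ 2 * (-(c i p * c i q) / c p q) := by
    have : B i ^ 2 = |B i| ^ 2 := (sq_abs _).symm
    rw [this, hB'.1, mul_pow, Real.sq_sqrt hB'.2]
  have hsum : A i ^ 2 + B i ^ 2 = 1 := by
    rw [hB2, hA2, div_mul_div_comm]
    have hd := hAnn'.2
    field_simp
    ring
  refine ⟨⟨hsum, ?_⟩, fun hij => ?_⟩
  · have h1 : ⟪a i, a i⟫ = (1 : ℝ) := by
      rw [real_inner_self_eq_norm_sq, ha]; norm_num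
    have h2 : ⟪n, n⟫ = (1 : ℝ) := by
      rw [real_inner_self_eq_norm_sq, hn]; norm_num
    have h3 : ⟪n, a i⟫ = (0 : ℝ) := by rw [real_inner_comm]; exact han i
    simp only [inner_add_left, inner_add_right, real_inner_smul_left,
      real_inner_smul_right, h1, h2, h3, han]
    nlinarith [hsum]
  · have h3 : ⟪n, a j⟫ = (0 : ℝ) := by rw [real_inner_comm]; exact han j
    have h2 : ⟪n, n⟫ = (1 : ℝ) := by
      rw [real_inner_self_eq_norm_sq, hn]; norm_num
    have hs := hsign i j hij
    have hcij : ⟪a i, a j⟫ = c i j := (hc i j).symm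
    simp only [inner_add_left, inner_add_right, real_inner_smul_left,
      real_inner_smul_right, h2, h3, han, hcij]
    nlinarith [hs]
end

section
/- Let V be a 4-dimensional real vector space with Lorentzian form g, and u, n ∈ V with g(u,u) = -1, g(n,n) = 1, g(u,n) = 0. Let Σ be a symmetric bilinear form on V with Σ(u,·) = 0, diagonalized on the orthogonal complement of u by an orthonormal basis e₁,e₂,e₃ with eigenvalues 2φ₁, 2φ₂, 2φ₃, i.e. Σ = Σ_i 2φ_i ω^i⊗ω^i where ω^i is dual to e_i. Write e_i = e_i^⊤ + n_i n with n_i := g(e_i,n) ≠ 0 and g(e_i^⊤,n)=0. Then for i ≠ j ≠ k: 2φ_i = Σ_{h,l} Σ(e_h^⊤, e_l^⊤) δ^{hl} + (1/(n_j n_k))·Σ(e_j^⊤, e_k^⊤). -/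
theorem strain_aux (φ0 φ1 φ2 a0 a1 a2 : ℝ)
    (hsq : a0^2 + a1^2 + a2^2 = 1) (h1 : a1 ≠ 0) (h2 : a2 ≠ 0) :
    2 * φ0
      = ((2*φ0*(1 - a0*a0)*(1 - a0*a0) + 2*φ1*(0 - a1*a0)*(0 - a1*a0) + 2*φ2*(0 - a2*a0)*(0 - a2*a0))
        + (2*φ0*(0 - a0*a1)*(0 - a0*a1) + 2*φ1*(1 - a1*a1)*(1 - a1*a1) + 2*φ2*(0 - a2*a1)*(0 - a2*a1))
        + (2*φ0*(0 - a0*a2)*(0 - a0*a2) + 2*φ1*(0 - a1*a2)*(0 - a1*a2) + 2*φ2*(1 - a2*a2)*(1 - a2*a2)))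
        + (1/(a1*a2)) * (2*φ0*(0 - a0*a1)*(0 - a0*a2) + 2*φ1*(1 - a1*a1)*(0 - a1*a2) + 2*φ2*(0 - a2*a1)*(1 - a2*a2)) := by
  field_simp
  linear_combination (-(a1*a2)*(φ0*a0^2 + φ1*a1^2 + φ2*a2^2)) * hsq

theorem strain_main (φ a : Fin 3 → ℝ)
    (hsq : (a 0)^2 + (a 1)^2 + (a 2)^2 = 1)
    (i j k : Fin 3) (hij : i ≠ j) (hjk : j ≠ k) (hik : i ≠ k)
    (hj : a j ≠ 0) (hk : a k ≠ 0) :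
    2 * φ i
      = (∑ h, ∑ x, 2 * φ x * ((if x = h then (1:ℝ) else 0) - a x * a h)
            * ((if x = h then (1:ℝ) else 0) - a x * a h))
        + (1 / (a j * a k))
          * (∑ x, 2 * φ x * ((if x = j then (1:ℝ) else 0) - a x * a j)
              * ((if x = k then (1:ℝ) else 0) - a x * a k)) := by
  simp only [Fin.sum_univ_three]
  have tri : ∀ x : Fin 3, x = 0 ∨ x = 1 ∨ x = 2 := by decide
  rcases tri i with rfl | rfl | rfl <;> rcases tri j with rfl | rfl | rfl <;>
      rcases tri k with rfl | rfl | rfl <;>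
    first
      | exact absurd rfl hij | exact absurd rfl hjk | exact absurd rfl hik
      | (norm_num [Fin.ext_iff]
         first
           | linear_combination strain_aux (φ 0) (φ 1) (φ 2) (a 0) (a 1) (a 2) (by linarith) (by assumption) (by assumption)
           | linear_combination strain_aux (φ 0) (φ 2) (φ 1) (a 0) (a 2) (a 1) (by linarith) (by assumption) (by assumption)
           | linear_combination strain_aux (φ 1) (φ 0) (φ 2) (a 1) (a 0) (a 2) (by linarith) (by assumption) (by assumption)
           | linear_combination strain_aux (φ 1) (φ 2) (φ 0) (a 1) (a 2) (a 0) (by linarith) (by assumption) (by assumption)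
           | linear_combination strain_aux (φ 2) (φ 0) (φ 1) (a 2) (a 0) (a 1) (by linarith) (by assumption) (by assumption)
           | linear_combination strain_aux (φ 2) (φ 1) (φ 0) (a 2) (a 1) (a 0) (by linarith) (by assumption) (by assumption))

/-- key identity of Proposition 6: in a 4-dimensional Lorentzian
space with unit timelike u, unit spacelike n orthogonal to u, an orthonormal
triad e₁,e₂,e₃ of u^⊥ (completing, with u, a frame of V), and the strain rate
Σ = Σ_i 2φ_i ω^i ⊗ ω^i (ω^i dual to e_i) with Σ(u,·) = 0, writing
e_i = e_i^⊤ + n_i·n with n_i = g(e_i,n) ≠ 0, one has for i ≠ j ≠ k: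
2φ_i = Σ_{h,l} Σ(e_h^⊤,e_l^⊤) δ^{hl} + (1/(n_j n_k))·Σ(e_j^⊤,e_k^⊤). -/
theorem strain_rate_eigenvalues_from_tangential_projections
    {V : Type*} [AddCommGroup V] [Module ℝ V]
    (g : V →ₗ[ℝ] V →ₗ[ℝ] ℝ) (hgsymm : ∀ v w, g v w = g w v)
    (u n : V) (huu : g u u = -1) (hnn : g n n = 1) (hun : g u n = 0)
    (e : Fin 3 → V)
    (hee : ∀ i j, g (e i) (e j) = if i = j then (1 : ℝ) else 0)
    (heu : ∀ i, g (e i) u = 0)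
    (hcomplete : ∀ v : V, v = (∑ i, g (e i) v • e i) - g u v • u)
    (hni : ∀ i, g (e i) n ≠ 0)
    (φ : Fin 3 → ℝ) (S : V → V → ℝ)
    (hSsymm : ∀ v w, S v w = S w v) (hSu : ∀ v, S u v = 0)
    (hS : ∀ v w, S v w = ∑ i, 2 * φ i * g (e i) v * g (e i) w) :
    ∀ i j k : Fin 3, i ≠ j → j ≠ k → i ≠ k →
      2 * φ i
        = (∑ h, S (e h - g (e h) n • n) (e h - g (e h) n • n))
          + (1 / (g (e j) n * g (e k) n))
            * S (e j - g (e j) n • n) (e k - g (e k) n • n) := by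
  have hgn : ∀ i, g n (e i) = g (e i) n := fun i => (hgsymm (e i) n).symm
  have hsq : (g (e 0) n)^2 + (g (e 1) n)^2 + (g (e 2) n)^2 = 1 := by
    have h2 : g n n = g n ((∑ i, g (e i) n • e i) - g u n • u) := by
      rw [← hcomplete n]
    simp only [map_sub, map_sum, map_add, map_smul, smul_eq_mul, hnn, hgn, hun,
      zero_smul, map_zero, sub_zero, Fin.sum_univ_three] at h2
    nlinarith [h2]
  have key : ∀ h l : Fin 3, S (e h - g (e h) n • n) (e l - g (e l) n • n)
      = ∑ x, 2 * φ x * ((if x = h then (1:ℝ) else 0) - g (e x) n * g (e h) n)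
          * ((if x = l then (1:ℝ) else 0) - g (e x) n * g (e l) n) := by
    intro h l
    rw [hS]
    refine Finset.sum_congr rfl fun x _ => ?_
    simp only [map_sub, map_smul, smul_eq_mul, hee]
    ring
  intro i j k hij hjk hik
  simp only [key]
  exact strain_main φ (fun x => g (e x) n) hsq i j k hij hjk hik (hni j) (hni k)
end
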